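/- Let x = (3 − √5)/4 and let p = x(1−2x)/(1−x), q = (1−2x)²/(1−x). For a function f : [0,1]² → [0,1] define L₁(f) = (x/(1−x))·(f(1/2,1/2) − (1−x))² + p·(f(1/2,0))² + p·(f(0,1/2))² + q·(f(0,0))², and L₂(f) = (x/(1−x))·(f(1/2,1/2) − x)² + p·(f(1/2,1) − 1)² + p·(f(1,1/2) − 1)² + q·(f(1,1) − 1)². Then for every f : [0,1]² → [0,1], (1/2)·L₁(f) + (1/2)·L₂(f) ≥ (5√5 − 11)/8. -/
import Mathlib


noncomputable section

/-- The optimal adversarial parameter `x = (3 - √5)/4`. -/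
def xopt : ℝ := (3 - Real.sqrt 5) / 4

/-- `p = x(1-2x)/(1-x)`. -/
def pw : ℝ := xopt * (1 - 2*xopt) / (1 - xopt)

/-- `q = (1-2x)²/(1-x)`. -/
def qw : ℝ := (1 - 2*xopt)^2 / (1 - xopt)

/-- Relative loss of `f` on the conditionally i.i.d. structure with prior `x`. -/
def L1 (f : ℝ → ℝ → ℝ) : ℝ :=
  (xopt/(1 - xopt)) * (f (1/2) (1/2) - (1 - xopt))^2
  + pw * (f (1/2) 0)^2 + pw * (f 0 (1/2))^2 + qw * (f 0 0)^2

/-- Relative loss of `f` on the mirror-image structure with prior `1-x`. -/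
def L2 (f : ℝ → ℝ → ℝ) : ℝ :=
  (xopt/(1 - xopt)) * (f (1/2) (1/2) - xopt)^2
  + pw * (f (1/2) 1 - 1)^2 + pw * (f 1 (1/2) - 1)^2 + qw * (f 1 1 - 1)^2

theorem stmt_5 (f : ℝ → ℝ → ℝ)
    (hf : ∀ a b : ℝ, a ∈ Set.Icc (0:ℝ) 1 → b ∈ Set.Icc (0:ℝ) 1 → f a b ∈ Set.Icc (0:ℝ) 1) :
    (1/2) * L1 f + (1/2) * L2 f ≥ (5 * Real.sqrt 5 - 11) / 8 := by
  have h5 : Real.sqrt 5 ^ 2 = 5 := Real.sq_sqrt (by norm_num)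
  set s := Real.sqrt 5 with hs
  have hs0 : 0 ≤ s := Real.sqrt_nonneg 5
  have hs2 : 2 < s := by nlinarith
  have hs3 : s < 3 := by nlinarith
  have hx : xopt = (3 - s)/4 := rfl
  have hc : xopt/(1-xopt) = s - 2 := by
    rw [hx]; rw [div_eq_iff (by nlinarith)]; nlinarith
  have hpw : 0 ≤ pw := by
    rw [pw, hx]
    apply div_nonneg (mul_nonneg (by nlinarith) (by nlinarith)) (by nlinarith)
  have hqw : 0 ≤ qw := by
    rw [qw]
    exact div_nonneg (sq_nonneg _) (by rw [hx]; nlinarith)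
  simp only [L1, L2]
  rw [hc, hx]
  nlinarith [sq_nonneg (2 * f (1/2) (1/2) - 1),
    mul_nonneg hpw (sq_nonneg (f (1/2) 0)),
    mul_nonneg hpw (sq_nonneg (f 0 (1/2))),
    mul_nonneg hqw (sq_nonneg (f 0 0)),
    mul_nonneg hpw (sq_nonneg (f (1/2) 1 - 1)),
    mul_nonneg hpw (sq_nonneg (f 1 (1/2) - 1)),
    mul_nonneg hqw (sq_nonneg (f 1 1 - 1))]
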